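/- Suppose there exists a polynomial P' of degree d in variables x_{ij}, i ∈ S⊔T, j ∈ [M], that 0.1-approximates the claw property for every pair of disjoint subsets S, T ⊆ [M] with |S| = F, |T| = G, where M = FG and G ≥ F ≥ 400. Then the polynomial P̃ = (25·E_{S,T}[P'_{ST}] + 18)/43 has degree at most d and (41/86)-approximates the collision property on functions h : [M] → [M] promised to be one-to-one or two-to-one. -/

import Mathlib

open Finset

lemma chA (n k : ℕ) (hn : 1 ≤ n) : n * (n-1).choose k = n.choose k * (n - k) := by
  obtain ⟨m, rfl⟩ : ∃ m, n = m + 1 := ⟨n - 1, by omega⟩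
  simpa [Nat.mul_comm] using (Nat.choose_mul_succ_eq m k)

lemma chB (n k : ℕ) (hn : 1 ≤ n) (hk : 1 ≤ k) : n * (n-1).choose (k-1) = n.choose k * k := by
  obtain ⟨m, rfl⟩ : ∃ m, n = m + 1 := ⟨n - 1, by omega⟩
  obtain ⟨j, rfl⟩ : ∃ j, k = j + 1 := ⟨k - 1, by omega⟩
  simpa using (Nat.add_one_mul_choose_eq m j)


lemma aux1 {α : Type*} [DecidableEq α] (A B : Finset α) (hBA : B ⊆ A) (k : ℕ) (hk : B.card ≤ k) :
    ((A.powersetCard k).filter (fun T => B ⊆ T)).card = (A.card - B.card).choose (k - B.card) := by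
  rw [← Finset.card_sdiff_of_subset hBA, ← Finset.card_powersetCard]
  apply Finset.card_bij' (fun T _ => T \ B) (fun U _ => U ∪ B)
  · intro T hT
    simp only [mem_filter, mem_powersetCard] at hT
    obtain ⟨⟨hTA, hTc⟩, hBT⟩ := hT
    rw [mem_powersetCard]
    constructor
    · exact sdiff_subset_sdiff hTA le_rfl
    · rw [card_sdiff_of_subset hBT, hTc]
  · intro U hU
    rw [mem_powersetCard] at hU
    obtain ⟨hUA, hUc⟩ := hU
    simp only [mem_filter, mem_powersetCard]
    refine ⟨⟨?_, ?_⟩, subset_union_right⟩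
    · exact union_subset (hUA.trans sdiff_subset) hBA
    · rw [card_union_of_disjoint, hUc]
      · omega
      · exact disjoint_of_subset_left hUA sdiff_disjoint
  · intro T hT
    simp only [mem_filter] at hT
    rw [sdiff_union_of_subset hT.2]
  · intro U hU
    rw [mem_powersetCard] at hU
    have : Disjoint U B := disjoint_of_subset_left hU.1 sdiff_disjoint
    rw [union_sdiff_right, sdiff_eq_self_of_disjoint this]

lemma aux2 (F G M : ℕ) (A B : Finset (Fin M)) (hAB : Disjoint A B)
    (hA : A.card ≤ F) (hB : B.card ≤ G) :
    ((((Finset.powersetCard F (Finset.univ : Finset (Fin M))) ×ˢ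
        (Finset.powersetCard G (Finset.univ : Finset (Fin M)))).filter
        (fun p => Disjoint p.1 p.2)).filter (fun p => A ⊆ p.1 ∧ B ⊆ p.2)).card
      = (M - B.card - A.card).choose (F - A.card) * ((M - F) - B.card).choose (G - B.card) := by
  classical
  rw [Finset.filter_filter, Finset.card_filter, Finset.sum_product]
  have inner : ∀ S : Finset (Fin M), S ∈ Finset.powersetCard F (Finset.univ : Finset (Fin M)) →
      (∑ T ∈ Finset.powersetCard G (Finset.univ : Finset (Fin M)),
        if Disjoint S T ∧ A ⊆ S ∧ B ⊆ T then 1 else 0)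
      = if A ⊆ S ∧ Disjoint B S then ((M - F) - B.card).choose (G - B.card) else 0 := by
    intro S hS
    rw [mem_powersetCard] at hS
    by_cases hcond : A ⊆ S ∧ Disjoint B S
    · rw [if_pos hcond]
      rw [← Finset.card_filter]
      have heq : (Finset.powersetCard G (Finset.univ : Finset (Fin M))).filter
          (fun T => Disjoint S T ∧ A ⊆ S ∧ B ⊆ T)
          = (Sᶜ.powersetCard G).filter (fun T => B ⊆ T) := by
        ext T
        simp only [mem_filter, mem_powersetCard, subset_univ, true_and]
        constructor
        · rintro ⟨hc, hd, -, hb⟩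
          exact ⟨⟨le_compl_iff_disjoint_left.mpr hd, hc⟩, hb⟩
        · rintro ⟨⟨hc, hcard⟩, hb⟩
          exact ⟨hcard, le_compl_iff_disjoint_left.mp hc, hcond.1, hb⟩
      rw [heq, aux1]
      · rw [card_compl, hS.2, Fintype.card_fin]
      · exact le_compl_iff_disjoint_left.mpr hcond.2.symm
      · omega
    · rw [if_neg hcond]
      apply Finset.sum_eq_zero
      intro T hT
      rw [if_neg]
      rintro ⟨hd, ha, hb⟩
      exact hcond ⟨ha, (disjoint_of_subset_right hb hd).symm⟩
  rw [Finset.sum_congr rfl inner, ← Finset.sum_filter, Finset.sum_const, smul_eq_mul]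
  congr 1
  have heq2 : (Finset.powersetCard F (Finset.univ : Finset (Fin M))).filter
      (fun S => A ⊆ S ∧ Disjoint B S) = (Bᶜ.powersetCard F).filter (fun S => A ⊆ S) := by
    ext S
    simp only [mem_filter, mem_powersetCard, subset_univ, true_and]
    constructor
    · rintro ⟨hc, ha, hd⟩
      exact ⟨⟨le_compl_iff_disjoint_left.mpr hd, hc⟩, ha⟩
    · rintro ⟨⟨hc, hcard⟩, ha⟩
      exact ⟨hcard, ha, le_compl_iff_disjoint_left.mp hc⟩
  rw [heq2, aux1]
  · rw [card_compl, Fintype.card_fin]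
  · exact le_compl_iff_disjoint_left.mpr hAB.symm
  · exact hA

lemma count0 (F G M : ℕ) :
    ((((Finset.powersetCard F (Finset.univ : Finset (Fin M))) ×ˢ
        (Finset.powersetCard G (Finset.univ : Finset (Fin M)))).filter
        (fun p => Disjoint p.1 p.2)).card
      = M.choose F * (M - F).choose G) := by
  have h := aux2 F G M ∅ ∅ (disjoint_empty_left _) (Nat.zero_le _) (Nat.zero_le _)
  simpa using h

lemma count1 (F G M : ℕ) (hF : 1 ≤ F) (hG : 1 ≤ G) (a b : Fin M) (hab : a ≠ b) :
    ((((Finset.powersetCard F (Finset.univ : Finset (Fin M))) ×ˢ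
        (Finset.powersetCard G (Finset.univ : Finset (Fin M)))).filter
        (fun p => Disjoint p.1 p.2)).filter (fun p => a ∈ p.1 ∧ b ∈ p.2)).card
      = (M - 2).choose (F - 1) * ((M - F) - 1).choose (G - 1) := by
  have h := aux2 F G M {a} {b} (by simpa using hab) (by simpa using hF) (by simpa using hG)
  rw [card_singleton] at h
  have heq : ((((Finset.powersetCard F (Finset.univ : Finset (Fin M))) ×ˢ
        (Finset.powersetCard G (Finset.univ : Finset (Fin M)))).filter
        (fun p => Disjoint p.1 p.2)).filter (fun p => a ∈ p.1 ∧ b ∈ p.2))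
      = ((((Finset.powersetCard F (Finset.univ : Finset (Fin M))) ×ˢ
        (Finset.powersetCard G (Finset.univ : Finset (Fin M)))).filter
        (fun p => Disjoint p.1 p.2)).filter (fun p => {a} ⊆ p.1 ∧ {b} ⊆ p.2)) :=
    Finset.filter_congr (fun p _ => by simp)
  rw [heq, h]
  congr 2 <;> omega

lemma count2 (F G M : ℕ) (hF : 2 ≤ F) (hG : 2 ≤ G) (a b a' b' : Fin M)
    (haa : a ≠ a') (hbb : b ≠ b') (h1 : a ≠ b) (h2 : a ≠ b') (h3 : a' ≠ b) (h4 : a' ≠ b') :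
    ((((Finset.powersetCard F (Finset.univ : Finset (Fin M))) ×ˢ
        (Finset.powersetCard G (Finset.univ : Finset (Fin M)))).filter
        (fun p => Disjoint p.1 p.2)).filter
        (fun p => (a ∈ p.1 ∧ b ∈ p.2) ∧ (a' ∈ p.1 ∧ b' ∈ p.2))).card
      = (M - 4).choose (F - 2) * ((M - F) - 2).choose (G - 2) := by
  have hd : Disjoint ({a, a'} : Finset (Fin M)) {b, b'} := by
    simp [Finset.disjoint_left, h1, h2, h3, h4]
  have h := aux2 F G M {a, a'} {b, b'} hd (by rw [card_pair haa]; exact hF)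
    (by rw [card_pair hbb]; exact hG)
  rw [card_pair haa, card_pair hbb] at h
  have heq : ((((Finset.powersetCard F (Finset.univ : Finset (Fin M))) ×ˢ
        (Finset.powersetCard G (Finset.univ : Finset (Fin M)))).filter
        (fun p => Disjoint p.1 p.2)).filter
        (fun p => (a ∈ p.1 ∧ b ∈ p.2) ∧ (a' ∈ p.1 ∧ b' ∈ p.2)))
      = ((((Finset.powersetCard F (Finset.univ : Finset (Fin M))) ×ˢ
        (Finset.powersetCard G (Finset.univ : Finset (Fin M)))).filter
        (fun p => Disjoint p.1 p.2)).filter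
        (fun p => ({a, a'} : Finset (Fin M)) ⊆ p.1 ∧ ({b, b'} : Finset (Fin M)) ⊆ p.2)) :=
    Finset.filter_congr (fun p _ => by
      simp only [insert_subset_iff, singleton_subset_iff]; tauto)
  rw [heq, h]
  congr 2 <;> omega

lemma id1 (F G M : ℕ) (hF : 1 ≤ F) (hG : 1 ≤ G) (hFM : F + G ≤ M) (hM : M = F * G) :
    M.choose F * (M - F).choose G
      = (M - 1) * ((M - 2).choose (F - 1) * ((M - F) - 1).choose (G - 1)) := by
  have hM1 : 1 ≤ M := by omega
  have A1 := chB M F hM1 hF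
  have A2 := chB (M - F) G (by omega) hG
  have A3 := chA (M - 1) (F - 1) (by omega)
  rw [show M - 1 - 1 = M - 2 from by omega, show M - 1 - (F - 1) = M - F from by omega] at A3
  set x := (M - 2).choose (F - 1) with hx
  set y := (M - F - 1).choose (G - 1) with hy
  set u := (M - 1).choose (F - 1) with hu
  set n1 := M.choose F with hn1
  set n2 := (M - F).choose G with hn2
  have key : M * ((M - 1) * (x * y)) = M * (n1 * n2) := by
    calc M * ((M - 1) * (x * y)) = ((M - 1) * x) * (M * y) := by ring
      _ = (u * (M - F)) * (M * y) := by rw [A3]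
      _ = (M * u) * ((M - F) * y) := by ring
      _ = (n1 * F) * (n2 * G) := by rw [A1, A2]
      _ = (n1 * n2) * (F * G) := by ring
      _ = M * (n1 * n2) := by rw [← hM]; ring
  exact (Nat.eq_of_mul_eq_mul_left (by omega) key).symm

lemma id2 (F G M : ℕ) (hF : 2 ≤ F) (hG : 2 ≤ G) (hFM : F + G + 2 ≤ M) :
    (F - 1) * (G - 1) * ((M - 2).choose (F - 1) * ((M - F) - 1).choose (G - 1))
      = (M - 2) * (M - 3) * ((M - 4).choose (F - 2) * ((M - F) - 2).choose (G - 2)) := by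
  have B1 := chB (M - 2) (F - 1) (by omega) (by omega)
  rw [show M - 2 - 1 = M - 3 from by omega, show F - 1 - 1 = F - 2 from by omega] at B1
  have B2 := chB (M - F - 1) (G - 1) (by omega) (by omega)
  rw [show M - F - 1 - 1 = M - F - 2 from by omega,
    show G - 1 - 1 = G - 2 from by omega] at B2
  have B3 := chA (M - 3) (F - 2) (by omega)
  rw [show M - 3 - 1 = M - 4 from by omega,
    show M - 3 - (F - 2) = M - F - 1 from by omega] at B3
  calc (F - 1) * (G - 1) * ((M - 2).choose (F - 1) * (M - F - 1).choose (G - 1))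
      = ((M - 2).choose (F - 1) * (F - 1)) * ((M - F - 1).choose (G - 1) * (G - 1)) := by ring
    _ = ((M - 2) * (M - 3).choose (F - 2)) * ((M - F - 1) * (M - F - 2).choose (G - 2)) := by
        rw [← B1, ← B2]
    _ = ((M - 3).choose (F - 2) * (M - F - 1)) * (M - 2) * (M - F - 2).choose (G - 2) := by ring
    _ = ((M - 3) * (M - 4).choose (F - 2)) * (M - 2) * (M - F - 2).choose (G - 2) := by rw [← B3]
    _ = (M - 2) * (M - 3) * ((M - 4).choose (F - 2) * (M - F - 2).choose (G - 2)) := by ring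

lemma quad (M : ℕ) (h5 : 5 ≤ M) : (M - 1) * ((M - 3) + M) ≤ 5 * (M * (M - 3)) := by
  obtain ⟨m, rfl⟩ : ∃ m, M = m + 5 := ⟨M - 5, by omega⟩
  have e1 : m + 5 - 1 = m + 4 := by omega
  have e3 : m + 5 - 3 = m + 2 := by omega
  rw [e1, e3]
  nlinarith

lemma clawcount (F G M : ℕ) (hF : 400 ≤ F) (hFG : F ≤ G) (hM : M = F * G)
    (h : Fin M → Fin M)
    (hh : ∀ i : Fin M, (Finset.univ.filter (fun i' => h i' = h i)).card = 2)
    (pairs : Finset (Finset (Fin M) × Finset (Fin M)))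
    (hpairs : pairs = ((Finset.powersetCard F (Finset.univ : Finset (Fin M))) ×ˢ
        (Finset.powersetCard G (Finset.univ : Finset (Fin M)))).filter
        (fun p => Disjoint p.1 p.2))
    (CL : Finset (Finset (Fin M) × Finset (Fin M)))
    (hCL : CL = pairs.filter (fun p => ∃ s ∈ p.1, ∃ t ∈ p.2, h s = h t)) :
    pairs.card ≤ 5 * CL.card := by
  classical
  have hG4 : 400 ≤ G := hF.trans hFG
  have hM0 : 160000 ≤ M := by
    rw [hM]; calc (160000 : ℕ) = 400 * 400 := by norm_num
      _ ≤ F * G := Nat.mul_le_mul hF hG4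
  have h3G : 3 * G ≤ M := by rw [hM]; exact Nat.mul_le_mul (by omega) le_rfl
  have hFGle : F + G + 4 ≤ M := by omega
  have hmem : ∀ p ∈ pairs, p.1.card = F ∧ p.2.card = G ∧ Disjoint p.1 p.2 := by
    intro p hp
    rw [hpairs, Finset.mem_filter, Finset.mem_product, Finset.mem_powersetCard,
      Finset.mem_powersetCard] at hp
    exact ⟨hp.1.1.2, hp.1.2.2, hp.2⟩
  -- partner structure of a two-to-one function
  have hpex : ∀ a : Fin M, ∃ b, b ≠ a ∧ h b = h a := by
    intro a
    have hca : 1 < (Finset.univ.filter (fun i' => h i' = h a)).card := by rw [hh a]; norm_num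
    obtain ⟨b, hbmem, hba⟩ := Finset.exists_mem_ne hca a
    exact ⟨b, hba, (Finset.mem_filter.mp hbmem).2⟩
  have huniq : ∀ a b c : Fin M, b ≠ a → c ≠ a → h b = h a → h c = h a → b = c := by
    intro a b c hb hc hhb hhc
    by_contra hbc
    have hsub : ({b, c, a} : Finset (Fin M)) ⊆ Finset.univ.filter (fun i' => h i' = h a) := by
      intro x hx
      simp only [Finset.mem_insert, Finset.mem_singleton] at hx
      rcases hx with rfl | rfl | rfl <;> simp [hhb, hhc]
    have h3 : ({b, c, a} : Finset (Fin M)).card = 3 := by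
      rw [Finset.card_insert_of_notMem (by simp [hbc, hb]),
        Finset.card_insert_of_notMem (by simp [hc]), Finset.card_singleton]
    have := Finset.card_le_card hsub
    rw [h3, hh a] at this
    omega
  -- the set of ordered collision pairs
  set D : Finset (Fin M × Fin M) :=
    (Finset.univ ×ˢ Finset.univ).filter (fun q => q.1 ≠ q.2 ∧ h q.1 = h q.2) with hD
  have hDmem : ∀ q ∈ D, q.1 ≠ q.2 ∧ h q.1 = h q.2 := by
    intro q hq
    simpa [hD, Finset.mem_filter] using hq
  have hDswap : ∀ q ∈ D, (q.2, q.1) ∈ D := by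
    intro q hq
    obtain ⟨h1, h2⟩ := hDmem q hq
    simp [hD, Finset.mem_filter, h1.symm, h2.symm]
  have hDcard : D.card = M := by
    rw [hD, Finset.card_filter, Finset.sum_product]
    have hone : ∀ a : Fin M,
        (∑ b : Fin M, if a ≠ b ∧ h a = h b then 1 else 0) = 1 := by
      intro a
      obtain ⟨b₀, hb₀, hhb₀⟩ := hpex a
      rw [← Finset.card_filter, Finset.card_eq_one]
      refine ⟨b₀, ?_⟩
      ext x
      simp only [Finset.mem_filter, Finset.mem_univ, true_and, Finset.mem_singleton]
      constructor
      · rintro ⟨hne, he⟩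
        exact huniq a x b₀ (Ne.symm hne) hb₀ he.symm hhb₀
      · rintro rfl
        exact ⟨Ne.symm hb₀, hhb₀.symm⟩
    rw [Finset.sum_congr rfl (fun a _ => hone a), Finset.sum_const, Finset.card_univ,
      Fintype.card_fin, smul_eq_mul, mul_one]
  set c1 := (M - 2).choose (F - 1) * ((M - F) - 1).choose (G - 1) with hc1
  set c2 := (M - 4).choose (F - 2) * ((M - F) - 2).choose (G - 2) with hc2
  set X : Finset (Fin M) × Finset (Fin M) → ℕ :=
    fun p => (D.filter (fun q => q.1 ∈ p.1 ∧ q.2 ∈ p.2)).card with hX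
  have hC1 : ∀ q ∈ D, (pairs.filter (fun p => q.1 ∈ p.1 ∧ q.2 ∈ p.2)).card = c1 := by
    intro q hq
    rw [hpairs]
    exact count1 F G M (by omega) (by omega) _ _ (hDmem q hq).1
  have stepA : ∑ p ∈ pairs, X p = M * c1 := by
    simp only [hX, Finset.card_filter]
    rw [Finset.sum_comm]
    rw [Finset.sum_congr rfl (fun q hq => ?_)]
    · rw [Finset.sum_const, hDcard, smul_eq_mul]
    · rw [← Finset.card_filter]
      exact hC1 q hq
  -- distinctness of two collision pairs
  have hdist : ∀ q ∈ D, ∀ q' ∈ D, q' ≠ q → q' ≠ (q.2, q.1) →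
      q.1 ≠ q'.1 ∧ q.2 ≠ q'.2 ∧ q.1 ≠ q'.2 ∧ q'.1 ≠ q.2 := by
    intro q hq q' hq' hne hnswap
    obtain ⟨hab, hhab⟩ := hDmem q hq
    obtain ⟨hcd, hhcd⟩ := hDmem q' hq'
    obtain ⟨a, b⟩ := q
    obtain ⟨c, d⟩ := q'
    simp only at hab hhab hcd hhcd hnswap ⊢
    refine ⟨?_, ?_, ?_, ?_⟩
    · intro e
      subst e
      have hdb : d = b := huniq a d b (Ne.symm hcd) (Ne.symm hab) hhcd.symm hhab.symm
      exact hne (by rw [hdb])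
    · intro e
      subst e
      have hac : a = c := huniq b a c hab hcd hhab hhcd
      exact hne (by rw [hac])
    · intro e
      subst e
      have hbc : b = c := huniq a b c (Ne.symm hab) hcd hhab.symm hhcd
      exact hnswap (by rw [hbc])
    · intro e
      subst e
      have hda : d = a := huniq c d a (Ne.symm hcd) hab hhcd.symm hhab
      exact hnswap (by rw [hda])
  have hC2 : ∀ q ∈ D, ∀ q' ∈ D, q' ≠ q → q' ≠ (q.2, q.1) →
      (pairs.filter (fun p => (q.1 ∈ p.1 ∧ q.2 ∈ p.2) ∧ (q'.1 ∈ p.1 ∧ q'.2 ∈ p.2))).card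
        = c2 := by
    intro q hq q' hq' hne hnswap
    obtain ⟨d1, d2, d3, d4⟩ := hdist q hq q' hq' hne hnswap
    rw [hpairs]
    exact count2 F G M (by omega) (by omega) q.1 q.2 q'.1 q'.2 d1 d2
      (hDmem q hq).1 d3 d4 (hDmem q' hq').1
  have hC0 : ∀ q : Fin M × Fin M,
      (pairs.filter (fun p => (q.1 ∈ p.1 ∧ q.2 ∈ p.2) ∧ (q.2 ∈ p.1 ∧ q.1 ∈ p.2))).card
        = 0 := by
    intro q
    rw [Finset.card_eq_zero, Finset.filter_eq_empty_iff]
    intro p hp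
    obtain ⟨-, -, hdisj⟩ := hmem p hp
    rintro ⟨⟨hh1, -⟩, ⟨-, hh4⟩⟩
    exact Finset.disjoint_left.mp hdisj hh1 hh4
  have hCdiag : ∀ q ∈ D,
      (pairs.filter (fun p => (q.1 ∈ p.1 ∧ q.2 ∈ p.2) ∧ (q.1 ∈ p.1 ∧ q.2 ∈ p.2))).card
        = c1 := by
    intro q hq
    have heq : pairs.filter (fun p => (q.1 ∈ p.1 ∧ q.2 ∈ p.2) ∧ (q.1 ∈ p.1 ∧ q.2 ∈ p.2))
        = pairs.filter (fun p => q.1 ∈ p.1 ∧ q.2 ∈ p.2) :=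
      Finset.filter_congr (fun p _ => by tauto)
    rw [heq]
    exact hC1 q hq
  have stepB : ∑ p ∈ pairs, X p * X p = M * (c1 + (M - 2) * c2) := by
    have hexp : ∀ p : Finset (Fin M) × Finset (Fin M), X p * X p = ∑ q ∈ D, ∑ q' ∈ D,
        if (q.1 ∈ p.1 ∧ q.2 ∈ p.2) ∧ (q'.1 ∈ p.1 ∧ q'.2 ∈ p.2) then 1 else 0 := by
      intro p
      simp only [hX, Finset.card_filter, Finset.sum_mul_sum]
      refine Finset.sum_congr rfl fun q _ => Finset.sum_congr rfl fun q' _ => ?_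
      by_cases h1 : (q.1 ∈ p.1 ∧ q.2 ∈ p.2) <;>
        by_cases h2 : (q'.1 ∈ p.1 ∧ q'.2 ∈ p.2) <;> simp [h1, h2]
    rw [Finset.sum_congr rfl fun p _ => hexp p, Finset.sum_comm]
    have hinner : ∀ q ∈ D, (∑ p ∈ pairs, ∑ q' ∈ D,
        if (q.1 ∈ p.1 ∧ q.2 ∈ p.2) ∧ (q'.1 ∈ p.1 ∧ q'.2 ∈ p.2) then 1 else 0)
        = c1 + (M - 2) * c2 := by
      intro q hq
      rw [Finset.sum_comm]
      set g : Fin M × Fin M → ℕ := fun q' =>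
        (pairs.filter (fun p => (q.1 ∈ p.1 ∧ q.2 ∈ p.2) ∧ (q'.1 ∈ p.1 ∧ q'.2 ∈ p.2))).card
        with hg
      have hrw : ∀ q' ∈ D, (∑ p ∈ pairs,
          if (q.1 ∈ p.1 ∧ q.2 ∈ p.2) ∧ (q'.1 ∈ p.1 ∧ q'.2 ∈ p.2) then 1 else 0) = g q' :=
        fun q' _ => (Finset.card_filter _ _).symm
      rw [Finset.sum_congr rfl hrw]
      have hswapne : ((q.2, q.1) : Fin M × Fin M) ≠ q :=
        fun e => (hDmem q hq).1 (congrArg Prod.snd e)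
      have hswapmem : ((q.2, q.1) : Fin M × Fin M) ∈ D.erase q :=
        Finset.mem_erase.mpr ⟨hswapne, hDswap q hq⟩
      rw [← Finset.add_sum_erase D g hq, ← Finset.add_sum_erase (D.erase q) g hswapmem]
      have hgq : g q = c1 := hCdiag q hq
      have hgs : g ((q.2, q.1) : Fin M × Fin M) = 0 := hC0 q
      have hgo : ∀ q' ∈ (D.erase q).erase (q.2, q.1), g q' = c2 := by
        intro q' hq'
        have h2 : q' ≠ (q.2, q.1) := (Finset.mem_erase.mp hq').1
        have h3 : q' ≠ q := (Finset.mem_erase.mp (Finset.mem_of_mem_erase hq')).1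
        exact hC2 q hq q' (Finset.mem_of_mem_erase (Finset.mem_of_mem_erase hq')) h3 h2
      rw [hgq, hgs, Finset.sum_congr rfl hgo, Finset.sum_const,
        Finset.card_erase_of_mem hswapmem, Finset.card_erase_of_mem hq, hDcard, smul_eq_mul]
      rw [show M - 1 - 1 = M - 2 from by omega]
      ring
    rw [Finset.sum_congr rfl hinner, Finset.sum_const, hDcard, smul_eq_mul]
  -- claw pairs are exactly those with X p ≠ 0
  have hXCL : pairs.filter (fun p => X p ≠ 0) = CL := by
    rw [hCL]
    refine Finset.filter_congr fun p hp => ?_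
    obtain ⟨-, -, hdisj⟩ := hmem p hp
    constructor
    · intro hx
      obtain ⟨q, hqmem⟩ := Finset.card_ne_zero.mp hx
      rw [Finset.mem_filter] at hqmem
      obtain ⟨hqD, hq1, hq2⟩ := hqmem
      exact ⟨q.1, hq1, q.2, hq2, (hDmem q hqD).2⟩
    · rintro ⟨s, hs, t, ht, hst⟩
      apply Finset.card_ne_zero.mpr
      refine ⟨(s, t), Finset.mem_filter.mpr ⟨?_, hs, ht⟩⟩
      rw [hD, Finset.mem_filter]
      refine ⟨Finset.mem_product.mpr ⟨Finset.mem_univ _, Finset.mem_univ _⟩, ?_, hst⟩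
      intro e
      have e' : s = t := e
      subst e'
      exact Finset.disjoint_left.mp hdisj hs ht
  -- Cauchy–Schwarz
  have hCS : (M * c1) * (M * c1) ≤ CL.card * (M * (c1 + (M - 2) * c2)) := by
    have e1 : ∑ p ∈ pairs.filter (fun p => X p ≠ 0), X p = ∑ p ∈ pairs, X p :=
      Finset.sum_filter_ne_zero _
    have e2 : ∑ p ∈ pairs.filter (fun p => X p ≠ 0), X p * X p ≤ ∑ p ∈ pairs, X p * X p :=
      Finset.sum_le_sum_of_subset (Finset.filter_subset _ _)
    have e3 : ((∑ p ∈ pairs.filter (fun p => X p ≠ 0), X p : ℕ) : ℝ) ^ 2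
        ≤ ((pairs.filter (fun p => X p ≠ 0)).card : ℝ) *
          ((∑ p ∈ pairs.filter (fun p => X p ≠ 0), X p * X p : ℕ) : ℝ) := by
      push_cast
      have := sq_sum_le_card_mul_sum_sq
        (s := pairs.filter (fun p => X p ≠ 0)) (f := fun p => (X p : ℝ))
      calc (∑ p ∈ pairs.filter (fun p => X p ≠ 0), (X p : ℝ)) ^ 2
          ≤ ((pairs.filter (fun p => X p ≠ 0)).card : ℝ) *
            ∑ p ∈ pairs.filter (fun p => X p ≠ 0), (X p : ℝ) ^ 2 := this
        _ = ((pairs.filter (fun p => X p ≠ 0)).card : ℝ) *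
            ∑ p ∈ pairs.filter (fun p => X p ≠ 0), (X p : ℝ) * (X p : ℝ) := by
              congr 1
              exact Finset.sum_congr rfl fun p _ => sq (X p : ℝ) ▸ by ring
    rw [e1, hXCL] at e3
    have e4 : ((∑ p ∈ pairs, X p : ℕ) : ℝ) ^ 2 ≤ (CL.card : ℝ) *
        ((∑ p ∈ pairs, X p * X p : ℕ) : ℝ) := by
      refine e3.trans ?_
      have e2' : ((∑ p ∈ CL, X p * X p : ℕ) : ℝ)
          ≤ ((∑ p ∈ pairs, X p * X p : ℕ) : ℝ) := by
        rw [← hXCL]; exact_mod_cast e2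
      exact mul_le_mul_of_nonneg_left e2' (by positivity)
    rw [stepA, stepB] at e4
    have : ((M * c1 : ℕ) : ℝ) * ((M * c1 : ℕ) : ℝ)
        ≤ (CL.card : ℝ) * ((M * (c1 + (M - 2) * c2) : ℕ) : ℝ) := by
      calc ((M * c1 : ℕ) : ℝ) * ((M * c1 : ℕ) : ℝ) = ((M * c1 : ℕ) : ℝ) ^ 2 := by ring
        _ ≤ _ := e4
    exact_mod_cast this
  -- binomial identities and positivity
  have hNid : pairs.card = (M - 1) * c1 := by
    rw [hpairs, count0 F G M, hc1]
    exact id1 F G M (by omega) (by omega) (by omega) hM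
  have hid2 : (F - 1) * (G - 1) * c1 = (M - 2) * (M - 3) * c2 := by
    rw [hc1, hc2]
    exact id2 F G M (by omega) (by omega) (by omega)
  have hc1pos : 0 < c1 := by
    rw [hc1]
    exact Nat.mul_pos (Nat.choose_pos (by omega)) (Nat.choose_pos (by omega))
  -- numeric conclusion in ℕ
  have s1 : M * (M * (c1 * c1)) ≤ M * (CL.card * (c1 + (M - 2) * c2)) := by
    calc M * (M * (c1 * c1)) = (M * c1) * (M * c1) := by ring
      _ ≤ CL.card * (M * (c1 + (M - 2) * c2)) := hCS
      _ = M * (CL.card * (c1 + (M - 2) * c2)) := by ring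
  have s2 : M * (c1 * c1) ≤ CL.card * (c1 + (M - 2) * c2) :=
    Nat.le_of_mul_le_mul_left s1 (by omega)
  have s3 : (M * (M - 3) * c1) * c1 ≤ (CL.card * ((M - 3) + (F - 1) * (G - 1))) * c1 := by
    calc (M * (M - 3) * c1) * c1 = (M - 3) * (M * (c1 * c1)) := by ring
      _ ≤ (M - 3) * (CL.card * (c1 + (M - 2) * c2)) := Nat.mul_le_mul le_rfl s2
      _ = CL.card * ((M - 3) * c1 + (M - 2) * (M - 3) * c2) := by ring
      _ = CL.card * ((M - 3) * c1 + (F - 1) * (G - 1) * c1) := by rw [← hid2]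
      _ = (CL.card * ((M - 3) + (F - 1) * (G - 1))) * c1 := by ring
  have s4 : M * (M - 3) * c1 ≤ CL.card * ((M - 3) + (F - 1) * (G - 1)) :=
    Nat.le_of_mul_le_mul_right s3 hc1pos
  have hfg : (F - 1) * (G - 1) ≤ M :=
    le_trans (Nat.mul_le_mul (Nat.sub_le _ _) (Nat.sub_le _ _)) (le_of_eq hM.symm)
  have hineq : (M - 1) * ((M - 3) + (F - 1) * (G - 1)) ≤ 5 * (M * (M - 3)) := by
    have hstep : (M - 1) * ((M - 3) + (F - 1) * (G - 1)) ≤ (M - 1) * ((M - 3) + M) :=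
      Nat.mul_le_mul le_rfl (by omega)
    exact hstep.trans (quad M (by omega))
  have hT : 0 < (M - 3) + (F - 1) * (G - 1) := by omega
  have final : pairs.card * ((M - 3) + (F - 1) * (G - 1))
      ≤ (5 * CL.card) * ((M - 3) + (F - 1) * (G - 1)) := by
    calc pairs.card * ((M - 3) + (F - 1) * (G - 1))
        = ((M - 1) * ((M - 3) + (F - 1) * (G - 1))) * c1 := by rw [hNid]; ring
      _ ≤ (5 * (M * (M - 3))) * c1 := Nat.mul_le_mul hineq le_rfl
      _ = 5 * (M * (M - 3) * c1) := by ring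
      _ ≤ 5 * (CL.card * ((M - 3) + (F - 1) * (G - 1))) := Nat.mul_le_mul le_rfl s4
      _ = (5 * CL.card) * ((M - 3) + (F - 1) * (G - 1)) := by ring
  exact Nat.le_of_mul_le_mul_right final hT

open Classical in
/-- Zhang-style reduction: from a family of degree-`d` polynomials `P'_{ST}` that
0.1-approximate the claw property on disjoint `(S,T)` with `|S| = F`, `|T| = G`,
`M = FG`, `G ≥ F ≥ 400`, the polynomial `P̃ = (25·E_{S,T}[P'_{ST}] + 18)/43` has
degree at most `d` and `(41/86)`-approximates the collision property on functions
`h : [M] → [M]` promised to be one-to-one or two-to-one. -/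
theorem stmt18 (F G M d : ℕ) (hF : 400 ≤ F) (hFG : F ≤ G) (hM : M = F * G)
    (P' : Finset (Fin M) → Finset (Fin M) → MvPolynomial (Fin M × Fin M) ℝ)
    (hdeg : ∀ S T : Finset (Fin M), S.card = F → T.card = G → Disjoint S T →
      (P' S T).totalDegree ≤ d)
    (hvars : ∀ S T : Finset (Fin M), S.card = F → T.card = G → Disjoint S T →
      ∀ v ∈ (P' S T).vars, v.1 ∈ S ∪ T)
    (happrox : ∀ S T : Finset (Fin M), S.card = F → T.card = G → Disjoint S T →
      ∀ h : Fin M → Fin M,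
        MvPolynomial.eval (fun v : Fin M × Fin M => if h v.1 = v.2 then (1 : ℝ) else 0)
            (P' S T) ∈ Set.Icc (0 : ℝ) 1 ∧
        |MvPolynomial.eval (fun v : Fin M × Fin M => if h v.1 = v.2 then (1 : ℝ) else 0)
            (P' S T) -
          (if ∃ s ∈ S, ∃ t ∈ T, h s = h t then 1 else 0)| ≤ 0.1) :
    let pairs := (Finset.powersetCard F (Finset.univ : Finset (Fin M)) ×ˢ
        Finset.powersetCard G (Finset.univ : Finset (Fin M))).filter
        (fun p => Disjoint p.1 p.2)
    let Ptilde := MvPolynomial.C ((25 : ℝ) / (43 * pairs.card)) *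
        (∑ p ∈ pairs, P' p.1 p.2) + MvPolynomial.C ((18 : ℝ) / 43)
    Ptilde.totalDegree ≤ d ∧
    (∀ h : Fin M → Fin M, Function.Injective h →
      MvPolynomial.eval (fun v : Fin M × Fin M => if h v.1 = v.2 then (1 : ℝ) else 0)
          Ptilde ∈ Set.Icc (0 : ℝ) 1 ∧
      |MvPolynomial.eval (fun v : Fin M × Fin M => if h v.1 = v.2 then (1 : ℝ) else 0)
          Ptilde - 0| ≤ 41 / 86) ∧
    (∀ h : Fin M → Fin M,
      (∀ i : Fin M, (Finset.univ.filter (fun i' => h i' = h i)).card = 2) →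
      MvPolynomial.eval (fun v : Fin M × Fin M => if h v.1 = v.2 then (1 : ℝ) else 0)
          Ptilde ∈ Set.Icc (0 : ℝ) 1 ∧
      |MvPolynomial.eval (fun v : Fin M × Fin M => if h v.1 = v.2 then (1 : ℝ) else 0)
          Ptilde - 1| ≤ 41 / 86) := by
  intro pairs Ptilde
  have hpairs : pairs = (Finset.powersetCard F (Finset.univ : Finset (Fin M)) ×ˢ
      Finset.powersetCard G (Finset.univ : Finset (Fin M))).filter
      (fun p => Disjoint p.1 p.2) := rfl
  have hPt : Ptilde = MvPolynomial.C ((25 : ℝ) / (43 * pairs.card)) *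
      (∑ p ∈ pairs, P' p.1 p.2) + MvPolynomial.C ((18 : ℝ) / 43) := rfl
  have hG4 : 400 ≤ G := hF.trans hFG
  have hM0 : 160000 ≤ M := by
    rw [hM]; calc (160000 : ℕ) = 400 * 400 := by norm_num
      _ ≤ F * G := Nat.mul_le_mul hF hG4
  have h3G : 3 * G ≤ M := by rw [hM]; exact Nat.mul_le_mul (by omega) le_rfl
  have hFGle : F + G + 4 ≤ M := by omega
  have hN : pairs.card = M.choose F * (M - F).choose G := by
    rw [hpairs]; exact count0 F G M
  have hNpos : 0 < pairs.card := by
    rw [hN]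
    exact Nat.mul_pos (Nat.choose_pos (by omega)) (Nat.choose_pos (by omega))
  have hmem : ∀ p ∈ pairs, p.1.card = F ∧ p.2.card = G ∧ Disjoint p.1 p.2 := by
    intro p hp
    rw [hpairs, Finset.mem_filter, Finset.mem_product, Finset.mem_powersetCard,
      Finset.mem_powersetCard] at hp
    exact ⟨hp.1.1.2, hp.1.2.2, hp.2⟩
  have hev : ∀ x : Fin M × Fin M → ℝ, MvPolynomial.eval x Ptilde
      = 25 / (43 * pairs.card) * (∑ p ∈ pairs, MvPolynomial.eval x (P' p.1 p.2)) + 18 / 43 := by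
    intro x
    rw [hPt, map_add, map_mul, MvPolynomial.eval_C, MvPolynomial.eval_C, map_sum]
  have hNr : (0:ℝ) < (pairs.card : ℝ) := by exact_mod_cast hNpos
  refine ⟨?_, ?_, ?_⟩
  · -- degree bound
    have hdeg1 : (∑ p ∈ pairs, P' p.1 p.2).totalDegree ≤ d := by
      refine (MvPolynomial.totalDegree_finset_sum _ _).trans (Finset.sup_le ?_)
      intro p hp
      obtain ⟨h1, h2, h3⟩ := hmem p hp
      exact hdeg _ _ h1 h2 h3
    rw [hPt]
    refine le_trans (MvPolynomial.totalDegree_add _ _) (max_le ?_ ?_)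
    · refine le_trans (MvPolynomial.totalDegree_mul _ _) ?_
      simpa [MvPolynomial.totalDegree_C] using hdeg1
    · simp [MvPolynomial.totalDegree_C]
  · -- injective case
    intro h hinj
    set ev : Finset (Fin M) × Finset (Fin M) → ℝ := fun p =>
      MvPolynomial.eval (fun v : Fin M × Fin M => if h v.1 = v.2 then (1 : ℝ) else 0)
        (P' p.1 p.2) with hevdef
    have hb : ∀ p ∈ pairs, 0 ≤ ev p ∧ ev p ≤ 0.1 := by
      intro p hp
      obtain ⟨h1, h2, h3⟩ := hmem p hp
      obtain ⟨hicc, habs⟩ := happrox p.1 p.2 h1 h2 h3 h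
      have hnc : ¬ ∃ s ∈ p.1, ∃ t ∈ p.2, h s = h t := by
        rintro ⟨s, hs, t, ht, hst⟩
        exact Finset.disjoint_left.mp h3 hs (hinj hst ▸ ht)
      rw [if_neg hnc, sub_zero] at habs
      exact ⟨hicc.1, (abs_le.mp habs).2⟩
    have hsum0 : 0 ≤ ∑ p ∈ pairs, ev p :=
      Finset.sum_nonneg fun p hp => (hb p hp).1
    have hsum1 : ∑ p ∈ pairs, ev p ≤ 0.1 * pairs.card := by
      calc ∑ p ∈ pairs, ev p ≤ ∑ _p ∈ pairs, (0.1 : ℝ) :=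
            Finset.sum_le_sum fun p hp => (hb p hp).2
        _ = 0.1 * pairs.card := by rw [Finset.sum_const, nsmul_eq_mul]; ring
    have hfrac : (25 : ℝ) / (43 * pairs.card) * (0.1 * pairs.card) = 2.5 / 43 := by
      field_simp; ring
    have hup : 25 / (43 * (pairs.card:ℝ)) * (∑ p ∈ pairs, ev p) ≤ 2.5 / 43 := by
      rw [← hfrac]
      exact mul_le_mul_of_nonneg_left hsum1 (by positivity)
    have hlow : 0 ≤ 25 / (43 * (pairs.card:ℝ)) * (∑ p ∈ pairs, ev p) :=
      mul_nonneg (by positivity) hsum0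
    rw [hev]
    refine ⟨⟨by linarith, by linarith⟩, ?_⟩
    rw [sub_zero, abs_of_nonneg (by linarith)]
    linarith
  · -- two-to-one case
    intro h hh
    set CL := pairs.filter (fun p => ∃ s ∈ p.1, ∃ t ∈ p.2, h s = h t) with hCLdef
    have hK5 : pairs.card ≤ 5 * CL.card := clawcount F G M hF hFG hM h hh pairs hpairs CL hCLdef
    set x : Fin M × Fin M → ℝ := fun v => if h v.1 = v.2 then (1 : ℝ) else 0 with hx
    set S := ∑ p ∈ pairs, MvPolynomial.eval x (P' p.1 p.2) with hSdef
    have hb : ∀ p ∈ pairs, 0 ≤ MvPolynomial.eval x (P' p.1 p.2) ∧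
        MvPolynomial.eval x (P' p.1 p.2) ≤ 1 := by
      intro p hp
      obtain ⟨h1, h2, h3⟩ := hmem p hp
      obtain ⟨hicc, -⟩ := happrox p.1 p.2 h1 h2 h3 h
      exact ⟨hicc.1, hicc.2⟩
    have hclaw : ∀ p ∈ CL, (0.9 : ℝ) ≤ MvPolynomial.eval x (P' p.1 p.2) := by
      intro p hp
      rw [hCLdef, Finset.mem_filter] at hp
      obtain ⟨hpp, hcl⟩ := hp
      obtain ⟨h1, h2, h3⟩ := hmem p hpp
      obtain ⟨-, habs⟩ := happrox p.1 p.2 h1 h2 h3 h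
      rw [if_pos hcl] at habs
      have := abs_le.mp habs
      linarith [this.1]
    have hsum0 : 0 ≤ S := Finset.sum_nonneg fun p hp => (hb p hp).1
    have hsum1 : S ≤ pairs.card := by
      calc S ≤ ∑ _p ∈ pairs, (1 : ℝ) := Finset.sum_le_sum fun p hp => (hb p hp).2
        _ = pairs.card := by rw [Finset.sum_const, nsmul_eq_mul, mul_one]
    have hsumK : (0.9 : ℝ) * CL.card ≤ S := by
      calc (0.9 : ℝ) * CL.card = ∑ _p ∈ CL, (0.9 : ℝ) := by
            rw [Finset.sum_const, nsmul_eq_mul]; ring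
        _ ≤ ∑ p ∈ CL, MvPolynomial.eval x (P' p.1 p.2) := Finset.sum_le_sum hclaw
        _ ≤ S := Finset.sum_le_sum_of_subset_of_nonneg
            (by rw [hCLdef]; exact Finset.filter_subset _ _)
            (fun p hp _ => (hb p hp).1)
    have hKr : (pairs.card : ℝ) ≤ 5 * CL.card := by exact_mod_cast hK5
    have hKnn : (0:ℝ) ≤ (CL.card : ℝ) := Nat.cast_nonneg _
    rw [hev x]
    have h43 : (0:ℝ) < 43 * (pairs.card : ℝ) := mul_pos (by norm_num) hNr
    have hcoef : (0:ℝ) ≤ 25 / (43 * (pairs.card : ℝ)) := le_of_lt (div_pos (by norm_num) h43)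
    have h9 : (9 : ℝ) / 86 ≤ 25 / (43 * pairs.card) * S := by
      rw [div_mul_eq_mul_div, le_div_iff₀ h43]
      linarith
    have hfrac : (25 : ℝ) / (43 * pairs.card) * (pairs.card : ℝ) = 25 / 43 := by
      rw [← div_div, div_mul_cancel₀ _ (ne_of_gt hNr)]
    have hup : 25 / (43 * (pairs.card : ℝ)) * S ≤ 25 / 43 := by
      have := mul_le_mul_of_nonneg_left hsum1 hcoef
      linarith
    have hlow0 : 0 ≤ 25 / (43 * (pairs.card : ℝ)) * S :=
      mul_nonneg hcoef hsum0
    refine ⟨⟨by linarith, by linarith⟩, ?_⟩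
    rw [abs_le]
    constructor <;> linarith
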